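/- Let M, T be symmetric positive definite n×n matrices. Then X := ( (1/2) T^{-1/2} (I + 4 T^{1/2} M⁻¹ T^{1/2})^{1/2} T^{-1/2} − (1/2) T⁻¹ )⁻¹ is symmetric positive definite and satisfies the fixed-point (Riccati) equation X = M + T − T (X + T)⁻¹ T. -/

import Mathlib

open Matrix

namespace Matrix.PosSemidef

open scoped ComplexOrder

/-- The positive semidefinite square root, as defined in Mathlib of December 2024
(removed from Mathlib since). -/
noncomputable def sqrt {n : Type*} [Fintype n] [DecidableEq n] {𝕜 : Type*} [RCLike 𝕜]
    {A : Matrix n n 𝕜} (hA : A.PosSemidef) : Matrix n n 𝕜 :=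
  hA.1.eigenvectorUnitary.1 * diagonal ((↑) ∘ (√·) ∘ hA.1.eigenvalues) *
  (star hA.1.eigenvectorUnitary : Matrix n n 𝕜)

end Matrix.PosSemidef

namespace Matrix.PosSemidef

lemma sqrt_mul_self {n : ℕ} {A : Matrix (Fin n) (Fin n) ℝ} (hA : A.PosSemidef) :
    hA.sqrt * hA.sqrt = A := by
  have hU := hA.1.eigenvectorUnitary.2
  have hUU : (star hA.1.eigenvectorUnitary : Matrix (Fin n) (Fin n) ℝ) *
      hA.1.eigenvectorUnitary.1 = 1 := Unitary.star_mul_self_of_mem hU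
  have hD : diagonal ((RCLike.ofReal : ℝ → ℝ) ∘ (√·) ∘ hA.1.eigenvalues) *
      diagonal (RCLike.ofReal ∘ (√·) ∘ hA.1.eigenvalues) = diagonal (RCLike.ofReal ∘ hA.1.eigenvalues) := by
    rw [diagonal_mul_diagonal]
    congr 1
    funext i
    simp [Real.mul_self_sqrt (hA.eigenvalues_nonneg i)]
  conv_rhs => rw [hA.1.spectral_theorem, Unitary.conjStarAlgAut_apply]
  simp only [sqrt]
  calc _ = hA.1.eigenvectorUnitary.1 * (diagonal ((RCLike.ofReal : ℝ → ℝ) ∘ (√·) ∘ hA.1.eigenvalues) *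
      ((star hA.1.eigenvectorUnitary : Matrix (Fin n) (Fin n) ℝ) * hA.1.eigenvectorUnitary.1) *
      diagonal (RCLike.ofReal ∘ (√·) ∘ hA.1.eigenvalues)) *
      (star hA.1.eigenvectorUnitary : Matrix (Fin n) (Fin n) ℝ) := by
        simp only [Matrix.mul_assoc]
    _ = _ := by rw [hUU, Matrix.mul_one, hD]

lemma posSemidef_sqrt {n : ℕ} {A : Matrix (Fin n) (Fin n) ℝ} (hA : A.PosSemidef) :
    hA.sqrt.PosSemidef := by
  have h := (PosSemidef.diagonal (d := (RCLike.ofReal : ℝ → ℝ) ∘ (√·) ∘ hA.1.eigenvalues)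
    (fun i => Real.sqrt_nonneg _)).mul_mul_conjTranspose_same hA.1.eigenvectorUnitary.1
  exact h

end Matrix.PosSemidef

section Aux

variable {n : ℕ}

lemma aux_posDef_of_posSemidef_isUnit {A : Matrix (Fin n) (Fin n) ℝ}
    (hA : A.PosSemidef) (h : IsUnit A.det) : A.PosDef := by
  refine PosDef.of_dotProduct_mulVec_pos hA.1 fun x hx =>
    lt_of_le_of_ne (hA.dotProduct_mulVec_nonneg x) fun h0 => hx ?_
  have hAx : A *ᵥ x = 0 := (hA.dotProduct_mulVec_zero_iff x).mp h0.symm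
  calc x = (A⁻¹ * A) *ᵥ x := by rw [Matrix.nonsing_inv_mul A h, Matrix.one_mulVec]
    _ = A⁻¹ *ᵥ (A *ᵥ x) := by rw [Matrix.mulVec_mulVec]
    _ = 0 := by rw [hAx, Matrix.mulVec_zero]

lemma aux_posDef_smul {A : Matrix (Fin n) (Fin n) ℝ} {c : ℝ} (hc : 0 < c)
    (hA : A.PosDef) : (c • A).PosDef := by
  refine PosDef.of_dotProduct_mulVec_pos ?_ fun x hx => ?_
  · show (c • A)ᴴ = c • A
    rw [conjTranspose_smul, star_trivial, hA.1.eq]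
  · rw [smul_mulVec, dotProduct_smul, smul_eq_mul]
    exact mul_pos hc (hA.dotProduct_mulVec_pos hx)

lemma aux_posDef_conj {A B : Matrix (Fin n) (Fin n) ℝ} (hA : A.PosDef)
    (hB : IsUnit B.det) : (B * A * Bᴴ).PosDef := by
  refine aux_posDef_of_posSemidef_isUnit (hA.posSemidef.mul_mul_conjTranspose_same B) ?_
  have hBH : IsUnit Bᴴ.det := by
    rwa [Matrix.det_conjTranspose, star_trivial]
  rw [Matrix.det_mul, Matrix.det_mul]
  exact (hB.mul (isUnit_iff_ne_zero.mpr hA.det_pos.ne')).mul hBH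

lemma aux_key (M T R S : Matrix (Fin n) (Fin n) ℝ) (hM : M.PosDef) (hR : R.PosDef)
    (hRR : R * R = T) (hS : S.PosDef)
    (hSsq : S * S = 1 + (4 : ℝ) • (R * M⁻¹ * R)) :
    ((((1/2 : ℝ) • (R⁻¹ * S * R⁻¹) - (1/2 : ℝ) • T⁻¹)⁻¹).PosDef) ∧
    ((1/2 : ℝ) • (R⁻¹ * S * R⁻¹) - (1/2 : ℝ) • T⁻¹)⁻¹ =
      M + T - T * ((((1/2 : ℝ) • (R⁻¹ * S * R⁻¹) - (1/2 : ℝ) • T⁻¹)⁻¹ + T))⁻¹ * T := by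
  have hRH : Rᴴ = R := hR.1.eq
  have uR : IsUnit R.det := isUnit_iff_ne_zero.mpr hR.det_pos.ne'
  have uM : IsUnit M.det := isUnit_iff_ne_zero.mpr hM.det_pos.ne'
  -- `S + 1` is positive definite
  have hSp1 : (S + 1).PosDef := hS.add Matrix.PosDef.one
  have uSp1 : IsUnit (S + 1).det := isUnit_iff_ne_zero.mpr hSp1.det_pos.ne'
  -- `S*S - 1` is positive definite
  have hC : S * S - 1 = (4 : ℝ) • (R * M⁻¹ * R) := by rw [hSsq]; abel
  have hCpd : (S * S - 1).PosDef := by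
    rw [hC]
    refine aux_posDef_smul (by norm_num) ?_
    have h := aux_posDef_conj hM.inv uR
    rwa [hRH] at h
  have uC : IsUnit (S * S - 1).det := isUnit_iff_ne_zero.mpr hCpd.det_pos.ne'
  -- factorizations
  have hfac : (S - 1) * (S + 1) = S * S - 1 := by noncomm_ring
  have hfac' : (S + 1) * (S - 1) = S * S - 1 := by noncomm_ring
  have uSm1 : IsUnit (S - 1).det := by
    have : IsUnit ((S - 1).det * (S + 1).det) := by
      rw [← Matrix.det_mul, hfac]; exact uC
    exact isUnit_of_mul_isUnit_left this
  -- inverse of T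
  have hTinv : T⁻¹ = R⁻¹ * R⁻¹ := by rw [← hRR, Matrix.mul_inv_rev]
  -- the matrix to invert
  have hY : (1/2 : ℝ) • (R⁻¹ * S * R⁻¹) - (1/2 : ℝ) • T⁻¹
      = (1/2 : ℝ) • (R⁻¹ * (S - 1) * R⁻¹) := by
    rw [hTinv, ← smul_sub]
    congr 1
    noncomm_ring
  -- its inverse
  have hYinv : ((1/2 : ℝ) • (R⁻¹ * (S - 1) * R⁻¹))⁻¹ = (2 : ℝ) • (R * (S - 1)⁻¹ * R) := by
    apply Matrix.inv_eq_right_inv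
    rw [Matrix.smul_mul, Matrix.mul_smul, smul_smul]
    norm_num
    calc R⁻¹ * (S - 1) * R⁻¹ * (R * (S - 1)⁻¹ * R)
        = R⁻¹ * ((S - 1) * (R⁻¹ * (R * ((S - 1)⁻¹ * R)))) := by
          simp only [Matrix.mul_assoc]
      _ = R⁻¹ * ((S - 1) * ((S - 1)⁻¹ * R)) := by
          rw [Matrix.nonsing_inv_mul_cancel_left _ _ uR]
      _ = R⁻¹ * R := by rw [Matrix.mul_nonsing_inv_cancel_left _ _ uSm1]
      _ = 1 := Matrix.nonsing_inv_mul _ uR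
  -- inverse of `S*S - 1`
  have hCinv : (S * S - 1)⁻¹ = (1/4 : ℝ) • (R⁻¹ * M * R⁻¹) := by
    apply Matrix.inv_eq_right_inv
    rw [hC, Matrix.smul_mul, Matrix.mul_smul, smul_smul]
    norm_num
    calc R * M⁻¹ * R * (R⁻¹ * M * R⁻¹)
        = R * (M⁻¹ * (R * (R⁻¹ * (M * R⁻¹)))) := by simp only [Matrix.mul_assoc]
      _ = R * (M⁻¹ * (M * R⁻¹)) := by rw [Matrix.mul_nonsing_inv_cancel_left _ _ uR]
      _ = R * R⁻¹ := by rw [Matrix.nonsing_inv_mul_cancel_left _ _ uM]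
      _ = 1 := Matrix.mul_nonsing_inv _ uR
  -- inverses of `S ± 1` in terms of `(S*S-1)⁻¹`
  have hSm1inv : (S - 1)⁻¹ = (S + 1) * (S * S - 1)⁻¹ := by
    apply Matrix.inv_eq_right_inv
    rw [← Matrix.mul_assoc, hfac, Matrix.mul_nonsing_inv _ uC]
  have hSp1inv : (S + 1)⁻¹ = (S - 1) * (S * S - 1)⁻¹ := by
    apply Matrix.inv_eq_right_inv
    rw [← Matrix.mul_assoc, hfac', Matrix.mul_nonsing_inv _ uC]
  -- key identity
  have hkey : (S - 1)⁻¹ = (S + 1)⁻¹ + (1/2 : ℝ) • (R⁻¹ * M * R⁻¹) := by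
    have h2 : (S - 1)⁻¹ - (S + 1)⁻¹ = (2 : ℝ) • (S * S - 1)⁻¹ := by
      rw [hSm1inv, hSp1inv, ← Matrix.sub_mul]
      have h3 : S + 1 - (S - 1) = (2 : ℝ) • (1 : Matrix (Fin n) (Fin n) ℝ) := by
        rw [two_smul]; abel
      rw [h3, Matrix.smul_mul, Matrix.one_mul]
    have h4 := h2
    rw [hCinv, smul_smul] at h4
    norm_num at h4
    rw [← h4]; abel
  -- `X = M + 2 R (S+1)⁻¹ R`
  have hZ : (2 : ℝ) • (R * (S - 1)⁻¹ * R) = M + (2 : ℝ) • (R * (S + 1)⁻¹ * R) := by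
    have hMM : (2 : ℝ) • (R * ((1/2 : ℝ) • (R⁻¹ * M * R⁻¹)) * R) = M := by
      rw [Matrix.mul_smul, Matrix.smul_mul, smul_smul]
      have h12 : (2 : ℝ) * (1/2) = 1 := by norm_num
      rw [h12, one_smul]
      calc R * (R⁻¹ * M * R⁻¹) * R
          = R * (R⁻¹ * (M * (R⁻¹ * R))) := by simp only [Matrix.mul_assoc]
        _ = M * (R⁻¹ * R) := by rw [Matrix.mul_nonsing_inv_cancel_left _ _ uR]
        _ = M := by rw [Matrix.nonsing_inv_mul _ uR, Matrix.mul_one]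
    rw [hkey, Matrix.mul_add, Matrix.add_mul, smul_add, hMM, add_comm]
  set X := ((1/2 : ℝ) • (R⁻¹ * S * R⁻¹) - (1/2 : ℝ) • T⁻¹)⁻¹ with hXdef
  have hX : X = M + (2 : ℝ) • (R * (S + 1)⁻¹ * R) := by
    rw [hXdef, hY, hYinv, hZ]
  have hXpd : X.PosDef := by
    rw [hX]
    refine hM.add (aux_posDef_smul (by norm_num) ?_)
    have h := aux_posDef_conj hSp1.inv uR
    rwa [hRH] at h
  refine ⟨hXpd, ?_⟩
  -- the Riccati equation
  have hX' : X = (2 : ℝ) • (R * (S - 1)⁻¹ * R) := by rw [hXdef, hY, hYinv]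
  have hXT : X + T = R * ((S - 1)⁻¹ * (S + 1)) * R := by
    rw [hX', ← hRR]
    have h1 : (S - 1)⁻¹ * (S + 1) = (2 : ℝ) • (S - 1)⁻¹ + 1 := by
      have h5 : S + 1 = (S - 1) + (2 : ℝ) • (1 : Matrix (Fin n) (Fin n) ℝ) := by
        rw [two_smul]; abel
      rw [h5, Matrix.mul_add, Matrix.nonsing_inv_mul _ uSm1, Matrix.mul_smul,
        Matrix.mul_one]
      abel
    rw [h1, Matrix.mul_add, Matrix.add_mul, Matrix.mul_one, Matrix.mul_smul,
      Matrix.smul_mul]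
  have hXTinv : (X + T)⁻¹ = R⁻¹ * ((S + 1)⁻¹ * (S - 1)) * R⁻¹ := by
    apply Matrix.inv_eq_right_inv
    rw [hXT]
    calc R * ((S - 1)⁻¹ * (S + 1)) * R * (R⁻¹ * ((S + 1)⁻¹ * (S - 1)) * R⁻¹)
        = R * ((S - 1)⁻¹ * ((S + 1) * (R * (R⁻¹ * ((S + 1)⁻¹ * ((S - 1) * R⁻¹)))))) := by
          simp only [Matrix.mul_assoc]
      _ = R * ((S - 1)⁻¹ * ((S + 1) * ((S + 1)⁻¹ * ((S - 1) * R⁻¹)))) := by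
          rw [Matrix.mul_nonsing_inv_cancel_left _ _ uR]
      _ = R * ((S - 1)⁻¹ * ((S - 1) * R⁻¹)) := by
          rw [Matrix.mul_nonsing_inv_cancel_left _ _ uSp1]
      _ = R * R⁻¹ := by rw [Matrix.nonsing_inv_mul_cancel_left _ _ uSm1]
      _ = 1 := Matrix.mul_nonsing_inv _ uR
  have hTXT : T * (X + T)⁻¹ * T = R * ((S + 1)⁻¹ * (S - 1)) * R := by
    rw [hXTinv, ← hRR]
    calc R * R * (R⁻¹ * ((S + 1)⁻¹ * (S - 1)) * R⁻¹) * (R * R)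
        = R * (R * (R⁻¹ * (((S + 1)⁻¹ * (S - 1)) * (R⁻¹ * (R * R))))) := by
          simp only [Matrix.mul_assoc]
      _ = R * (((S + 1)⁻¹ * (S - 1)) * (R⁻¹ * (R * R))) := by
          rw [Matrix.mul_nonsing_inv_cancel_left _ _ uR]
      _ = R * (((S + 1)⁻¹ * (S - 1)) * R) := by
          rw [Matrix.nonsing_inv_mul_cancel_left _ _ uR]
      _ = R * ((S + 1)⁻¹ * (S - 1)) * R := by simp only [Matrix.mul_assoc]
  rw [hTXT]
  have hfinal : T - R * ((S + 1)⁻¹ * (S - 1)) * R = (2 : ℝ) • (R * (S + 1)⁻¹ * R) := by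
    rw [← hRR]
    have h1 : (1 : Matrix (Fin n) (Fin n) ℝ) - (S + 1)⁻¹ * (S - 1)
        = (2 : ℝ) • (S + 1)⁻¹ := by
      have h2 : S + 1 - (S - 1) = (2 : ℝ) • (1 : Matrix (Fin n) (Fin n) ℝ) := by
        rw [two_smul]; abel
      calc (1 : Matrix (Fin n) (Fin n) ℝ) - (S + 1)⁻¹ * (S - 1)
          = (S + 1)⁻¹ * (S + 1) - (S + 1)⁻¹ * (S - 1) := by
            rw [Matrix.nonsing_inv_mul _ uSp1]
        _ = (S + 1)⁻¹ * (S + 1 - (S - 1)) := by noncomm_ring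
        _ = (2 : ℝ) • (S + 1)⁻¹ := by
            rw [h2, Matrix.mul_smul, Matrix.mul_one]
    calc R * R - R * ((S + 1)⁻¹ * (S - 1)) * R
        = R * ((1 : Matrix (Fin n) (Fin n) ℝ) - (S + 1)⁻¹ * (S - 1)) * R := by
          noncomm_ring
      _ = (2 : ℝ) • (R * (S + 1)⁻¹ * R) := by
          rw [h1, Matrix.mul_smul, Matrix.smul_mul]
  rw [hX, add_sub_assoc, hfinal]

end Aux

/-- The stationary EFIM. Let `M`, `T` be symmetric positive definite and `S` the
(unique) symmetric positive definite square root of `I + 4 T^{1/2} M⁻¹ T^{1/2}`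
(with `T^{1/2}` the positive semidefinite square root of `T`). Then
`X := ((1/2) T^{-1/2} S T^{-1/2} − (1/2) T⁻¹)⁻¹` is positive definite and solves the
Riccati fixed-point equation `X = M + T − T (X + T)⁻¹ T`. -/
theorem stmt9 {n : ℕ} (M T : Matrix (Fin n) (Fin n) ℝ) (hM : M.PosDef) (hT : T.PosDef)
    (S : Matrix (Fin n) (Fin n) ℝ) (hS : S.PosDef)
    (hSsq : S * S = 1 + (4 : ℝ) • (hT.posSemidef.sqrt * M⁻¹ * hT.posSemidef.sqrt)) :
    ((((1/2 : ℝ) • ((hT.posSemidef.sqrt)⁻¹ * S * (hT.posSemidef.sqrt)⁻¹) -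
        (1/2 : ℝ) • T⁻¹)⁻¹).PosDef) ∧
    ((1/2 : ℝ) • ((hT.posSemidef.sqrt)⁻¹ * S * (hT.posSemidef.sqrt)⁻¹) -
        (1/2 : ℝ) • T⁻¹)⁻¹ =
      M + T - T * ((((1/2 : ℝ) • ((hT.posSemidef.sqrt)⁻¹ * S * (hT.posSemidef.sqrt)⁻¹) -
        (1/2 : ℝ) • T⁻¹)⁻¹ + T))⁻¹ * T := by
  have hRR : hT.posSemidef.sqrt * hT.posSemidef.sqrt = T := hT.posSemidef.sqrt_mul_self
  have hRpd : (hT.posSemidef.sqrt).PosDef := by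
    refine aux_posDef_of_posSemidef_isUnit hT.posSemidef.posSemidef_sqrt ?_
    have : IsUnit ((hT.posSemidef.sqrt).det * (hT.posSemidef.sqrt).det) := by
      rw [← Matrix.det_mul, hRR]; exact isUnit_iff_ne_zero.mpr hT.det_pos.ne'
    exact isUnit_of_mul_isUnit_left this
  exact aux_key M T hT.posSemidef.sqrt S hM hRpd hRR hS hSsq
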